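/- Let X be a Tychonoff space, λ a bornology on X with a closed base, (Y,ρ) a metric space, and e : X_λ → X the natural condensation from the λ-leader X_λ of X onto X. If for every f ∈ C_{e⁻¹(λ),ρ}(X_λ,Y) \ e^#(C_{λ,ρ}(X,Y)) there is a Gδ-set V in C_{e⁻¹(λ),ρ}(X_λ,Y) containing f and disjoint from e^#(C_{λ,ρ}(X,Y)), then X is functionally generated with respect to Y by σλ. -/

import Mathlib

open Filter Topology Set
open scoped UniformConvergence Uniformity

universe u v

/-- A bornology (family of nonempty sets covering X, closed under finite unions and
nonempty subsets) which is moreover closed under taking closures (has a closed base). -/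
def IsBornologyWithClosedBase {X : Type u} [TopologicalSpace X] (L : Set (Set X)) : Prop :=
  (∀ A ∈ L, A.Nonempty) ∧ (⋃₀ L = univ) ∧ (∀ A ∈ L, ∀ B ∈ L, A ∪ B ∈ L) ∧
    (∀ A ∈ L, ∀ B : Set X, B.Nonempty → B ⊆ A → B ∈ L) ∧ (∀ A ∈ L, closure A ∈ L)

/-- X is functionally generated by the family μ with respect to Y if for every
discontinuous f : X → Y there is A ∈ μ such that f|A extends to no continuous map X → Y. -/
def FunctionallyGenerated (X : Type u) [TopologicalSpace X] (μ : Set (Set X))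
    (Y : Type v) [TopologicalSpace Y] : Prop :=
  ∀ f : X → Y, ¬ Continuous f →
    ∃ A ∈ μ, ¬ ∃ g : X → Y, Continuous g ∧ ∀ x ∈ A, g x = f x

/-- σλ: the family of countable unions of members of L. -/
def sigmaFam {X : Type u} (L : Set (Set X)) : Set (Set X) :=
  {B | ∃ S : ℕ → Set X, (∀ n, S n ∈ L) ∧ B = ⋃ n, S n}

/-- C_{λ,ρ}(X,Y): the continuous maps from X to the metric space Y, carrying the
uniformity (hence topology) of uniform convergence on members of L. -/
def CL (X : Type u) [TopologicalSpace X] (Y : Type v) [MetricSpace Y]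
    (L : Set (Set X)) : Type (max u v) := C(X, Y)

noncomputable instance CL.instUniformSpace (X : Type u) [TopologicalSpace X] (Y : Type v)
    [MetricSpace Y] (L : Set (Set X)) : UniformSpace (CL X Y L) :=
  UniformSpace.comap (fun f => UniformOnFun.ofFun L (⇑(show C(X,Y) from f)))
    (UniformOnFun.uniformSpace X Y L)

/-- The λ-leader of X: the same set with the final topology with respect to the
inclusions of the closures of members of L (so a set is closed iff its intersection
with the closure of each member of L is closed there). -/
def Leader (X : Type u) [TopologicalSpace X] (L : Set (Set X)) : Type u := X

instance Leader.instTopologicalSpace (X : Type u) [TopologicalSpace X] (L : Set (Set X)) :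
    TopologicalSpace (Leader X L) :=
  show TopologicalSpace X from
    ⨆ A ∈ L, TopologicalSpace.coinduced (Subtype.val : closure A → X) inferInstance


open UniformConvergence Uniformity in
/-- Auxiliary: a map that is continuous on `closure A` for each `A ∈ L` is continuous
on the leader. -/
theorem leader_cont_aux {X : Type u} [TopologicalSpace X] {L : Set (Set X)}
    {Y : Type v} [TopologicalSpace Y] (g : X → Y)
    (hg : ∀ A ∈ L, Continuous (g ∘ (Subtype.val : closure A → X))) :
    Continuous (show Leader X L → Y from g) := by
  have : Continuous[⨆ A ∈ L, TopologicalSpace.coinduced (Subtype.val : closure A → X)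
      inferInstance, _] g := by
    rw [continuous_iSup_dom]
    intro A
    rw [continuous_iSup_dom]
    intro hA
    rw [continuous_coinduced_dom]
    exact hg A hA
  exact this

/-- If every f in C_{e⁻¹(λ),ρ}(X_λ,Y) \\ e^#(C_{λ,ρ}(X,Y)) lies in a Gδ-set disjoint
from e^#(C_{λ,ρ}(X,Y)) (where e : X_λ → X is the natural condensation from the
λ-leader, so e^#(C_{λ,ρ}(X,Y)) consists of those g that are continuous for the
original topology of X), then X is functionally generated with respect to Y by σλ. -/
theorem functionallyGenerated_of_gdelta (X : Type u) [TopologicalSpace X] [T35Space X]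
    (Y : Type u) [MetricSpace Y] (L : Set (Set X)) (hL : IsBornologyWithClosedBase L)
    (h : ∀ f : CL (Leader X L) Y (show Set (Set (Leader X L)) from L),
      ¬ Continuous (show X → Y from ⇑(show C(Leader X L, Y) from f)) →
      ∃ V : Set (CL (Leader X L) Y (show Set (Set (Leader X L)) from L)),
        IsGδ V ∧ f ∈ V ∧
        ∀ g ∈ V, ¬ Continuous (show X → Y from ⇑(show C(Leader X L, Y) from g))) :
    FunctionallyGenerated X (sigmaFam L) Y := by
  classical
  intro f hf
  by_contra hcon
  push_neg at hcon
  by_cases hX : Nonempty X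
  swap
  · rw [not_nonempty_iff] at hX
    exact hf ⟨fun s _ => by
      convert isOpen_empty
      exact eq_empty_of_isEmpty _⟩
  obtain ⟨x₀⟩ := hX
  -- f is continuous on the leader
  have hfA : ∀ A ∈ L, Continuous (f ∘ (Subtype.val : closure A → X)) := by
    intro A hA
    obtain ⟨g, hgc, hgf⟩ := hcon (closure A)
      ⟨fun _ => closure A, fun _ => hL.2.2.2.2 A hA, (iUnion_const _).symm⟩
    exact (hgc.comp continuous_subtype_val).congr fun x => hgf x x.2
  let LL : Set (Set (Leader X L)) := show Set (Set (Leader X L)) from L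
  have hLL : LL = (show Set (Set (Leader X L)) from L) := rfl
  set F : CL (Leader X L) Y LL := show C(Leader X L, Y) from
    ⟨show Leader X L → Y from f, leader_cont_aux f hfA⟩ with hF
  obtain ⟨V, hVgd, hFV, hVd⟩ := h F hf
  obtain ⟨T, hTo, hTc, rfl⟩ := hVgd
  rcases T.eq_empty_or_nonempty with rfl | hTne
  · exact hVd (show C(Leader X L, Y) from
      ⟨fun _ => f x₀, continuous_const⟩) (by simp; exact mem_univ _) continuous_const
  obtain ⟨U, rfl⟩ := hTc.exists_eq_range hTne
  have hLne : LL.Nonempty := by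
    have : (x₀ : X) ∈ ⋃₀ L := hL.2.1 ▸ mem_univ x₀
    obtain ⟨A, hA, -⟩ := this
    exact ⟨A, hA⟩
  have hLdir : DirectedOn (· ⊆ ·) LL := fun A hA B hB =>
    ⟨A ∪ B, hL.2.2.1 A hA B hB, subset_union_left, subset_union_right⟩
  have hbasis := UniformOnFun.hasBasis_uniformity_of_basis (Leader X L) Y LL hLne hLdir
    Metric.uniformity_basis_dist
  set φ : CL (Leader X L) Y LL → (Leader X L →ᵤ[LL] Y) :=
    fun g => UniformOnFun.ofFun LL (⇑(show C(Leader X L, Y) from g)) with hφ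
  have huni : 𝓤 (CL (Leader X L) Y LL) = Filter.comap (Prod.map φ φ)
      (𝓤 (Leader X L →ᵤ[LL] Y)) := rfl
  have hb2 : (𝓤 (CL (Leader X L) Y LL)).HasBasis
      (fun Si : Set (Leader X L) × ℝ => Si.1 ∈ LL ∧ 0 < Si.2)
      (fun Si => Prod.map φ φ ⁻¹' UniformOnFun.gen LL Si.1 {p : Y × Y | dist p.1 p.2 < Si.2}) := by
    rw [huni]
    exact hbasis.comap _
  have hnhds := nhds_basis_uniformity' hb2 (x := F)
  have step : ∀ n : ℕ, ∃ A, A ∈ LL ∧ ∃ ε : ℝ, 0 < ε ∧ ∀ g : CL (Leader X L) Y LL,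
      (∀ x ∈ A, dist ((show C(Leader X L, Y) from g) x) (f x) < ε) → g ∈ U n := by
    intro n
    have hmem : U n ∈ 𝓝 F :=
      (hTo (U n) (mem_range_self n)).mem_nhds (hFV (U n) (mem_range_self n))
    rcases hnhds.mem_iff.mp hmem with ⟨⟨A, ε⟩, ⟨hA, hε⟩, hsub⟩
    refine ⟨A, hA, ε, hε, fun g hg => hsub ?_⟩
    intro x hx
    show dist (f x) ((show C(Leader X L, Y) from g) x) < ε
    rw [dist_comm]
    exact hg x hx
  choose A hA ε hε hkey using step
  obtain ⟨g, hgc, hgf⟩ := hcon (⋃ n, A n)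
    ⟨fun n => show Set X from A n, hA, rfl⟩
  set G : CL (Leader X L) Y LL := show C(Leader X L, Y) from
    ⟨show Leader X L → Y from g,
      leader_cont_aux g fun B _ => hgc.comp continuous_subtype_val⟩ with hG
  have hGV : G ∈ ⋂₀ range U := by
    rintro s ⟨n, rfl⟩
    refine hkey n G fun x hx => ?_
    have : g x = f x := hgf x (mem_iUnion.mpr ⟨n, hx⟩)
    show dist (g x) (f x) < ε n
    simp [this, hε n]
  exact hVd G hGV hgc
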